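/- arXiv:1807.00660 — 2 statements merged into one kernel-verified Lean document; each statement's English description precedes it below -/
import Mathlib

section
/- Let K be an algebraically closed field, A an associative unital K-algebra, and Z ⊆ A a subalgebra contained in the centre of A such that Z is a finitely generated commutative K-algebra and A is generated as a Z-module by n elements. Then every simple (irreducible) A-module is finite-dimensional over K, of dimension at most n. -/
/-- Zariski's lemma / weak Nullstellensatz: in a finitely generated algebra over an
algebraically closed field, every element is a scalar modulo any maximal ideal. -/
theorem stmt_1_aux (K : Type*) [Field K] [IsAlgClosed K] (R : Type*) [CommRing R]
    [Algebra K R] [Algebra.FiniteType K R] (m : Ideal R) [m.IsMaximal] (z : R) :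
    ∃ lam : K, z - algebraMap K R lam ∈ m := by
  letI : Field (R ⧸ m) := Ideal.Quotient.field m
  haveI : Algebra.FiniteType K (R ⧸ m) :=
    Algebra.FiniteType.of_surjective
      (Ideal.Quotient.mkₐ K m) (Ideal.Quotient.mkₐ_surjective K m)
  haveI : Module.Finite K (R ⧸ m) := finite_of_finite_type_of_isJacobsonRing K _
  haveI : Algebra.IsIntegral K (R ⧸ m) := Algebra.IsIntegral.of_finite K _
  have hsurj : Function.Surjective (algebraMap K (R ⧸ m)) :=
    IsAlgClosed.algebraMap_bijective_of_isIntegral.2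
  obtain ⟨lam, hlam⟩ := hsurj (Ideal.Quotient.mk m z)
  refine ⟨lam, ?_⟩
  rw [← Ideal.Quotient.eq_zero_iff_mem, map_sub, ← hlam, ← Ideal.Quotient.algebraMap_eq,
    ← IsScalarTower.algebraMap_apply, sub_self]

/-- Let `K` be an algebraically closed field, `A` an associative unital
`K`-algebra, and `Z ⊆ A` a subalgebra contained in the centre of `A` such that `Z` is a
finitely generated commutative `K`-algebra and `A` is generated as a `Z`-module by `n`
elements.  Then every simple (irreducible) `A`-module is finite-dimensional over `K`,
of dimension at most `n`. -/
theorem stmt_1 (K : Type*) [Field K] [IsAlgClosed K]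
    (A : Type*) [Ring A] [Algebra K A]
    (Z : Subalgebra K A)
    (hcentral : (Z : Set A) ⊆ Set.center A)
    (hfg : Z.FG)
    (n : ℕ) (a : Fin n → A)
    (hgen : Submodule.span Z (Set.range a) = ⊤)
    (M : Type*) [AddCommGroup M] [Module K M] [Module A M] [IsScalarTower K A M]
    [IsSimpleModule A M] :
    FiniteDimensional K M ∧ Module.finrank K M ≤ n := by
  -- `Z` is commutative since it is central
  letI : CommRing ↥Z :=
    { (inferInstance : Ring ↥Z) with
      mul_comm := fun x y => Subtype.ext ((hcentral x.2).comm (y : A)) }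
  haveI hft : Algebra.FiniteType K ↥Z := (Subalgebra.fg_iff_finiteType Z).mp hfg
  -- a nonzero element of M
  haveI : Nontrivial M := IsSimpleModule.nontrivial A M
  obtain ⟨m₀, hm₀⟩ := exists_ne (0 : M)
  -- M = A • m₀
  have hspanA : Submodule.span A {m₀} = ⊤ := by
    rcases eq_bot_or_eq_top (Submodule.span A {m₀}) with h | h
    · exact absurd (Submodule.span_eq_bot.mp h m₀ rfl) hm₀
    · exact h
  have hsurjA : ∀ v : M, ∃ x : A, x • m₀ = v := fun v =>
    Submodule.mem_span_singleton.mp (hspanA ▸ Submodule.mem_top)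
  have hzsmul : ∀ (z : ↥Z) (x : A) (w : M), (z • x) • w = z • (x • w) := by
    intro z x w
    show ((z : A) * x) • w = (z : A) • (x • w)
    rw [mul_smul]
  -- M is a finitely generated Z-module
  have hmemZ : ∀ x : A, x • m₀ ∈ Submodule.span ↥Z (Set.range fun i => a i • m₀) := by
    intro x
    have hx : x ∈ Submodule.span ↥Z (Set.range a) := hgen ▸ Submodule.mem_top
    induction hx using Submodule.span_induction with
    | mem x hx => obtain ⟨i, rfl⟩ := hx; exact Submodule.subset_span ⟨i, rfl⟩
    | zero => rw [zero_smul]; exact Submodule.zero_mem _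
    | add x y _ _ hx hy => rw [add_smul]; exact Submodule.add_mem _ hx hy
    | smul z x _ hx => rw [hzsmul]; exact Submodule.smul_mem _ z hx
  have hspanZ : Submodule.span ↥Z (Set.range fun i => a i • m₀) = ⊤ := by
    rw [eq_top_iff]
    intro v _
    obtain ⟨x, rfl⟩ := hsurjA v
    exact hmemZ x
  haveI hfinZ : Module.Finite ↥Z M :=
    ⟨⟨(Set.finite_range _).toFinset, by rw [Set.Finite.coe_toFinset]; exact hspanZ⟩⟩
  -- a maximal proper Z-submodule N of M
  haveI : IsCoatomic (Submodule ↥Z M) :=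
    CompleteLattice.coatomic_of_top_compact
      ((Submodule.fg_iff_compact _).mp hfinZ.fg_top)
  have hbotne : (⊥ : Submodule ↥Z M) ≠ ⊤ := by
    intro h
    have hmem : m₀ ∈ (⊥ : Submodule ↥Z M) := h.symm ▸ Submodule.mem_top
    exact hm₀ (Submodule.mem_bot _ |>.mp hmem)
  obtain ⟨N, hN, -⟩ := (eq_top_or_exists_le_coatom (⊥ : Submodule ↥Z M)).resolve_left hbotne
  haveI : IsSimpleModule ↥Z (M ⧸ N) := isSimpleModule_iff_isCoatom.mpr hN
  set m : Ideal ↥Z := Module.annihilator ↥Z (M ⧸ N) with hm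
  haveI hmax : m.IsMaximal := IsSimpleModule.annihilator_isMaximal
  -- every element of m annihilates M
  have hann : ∀ z ∈ m, ∀ v : M, z • v = 0 := by
    have hle : (m • ⊤ : Submodule ↥Z M) ≤ N := by
      refine Submodule.smul_le.mpr fun z hz v _ => ?_
      have := Module.mem_annihilator.mp hz (Submodule.Quotient.mk (p := N) v)
      rwa [← Submodule.Quotient.mk_smul, Submodule.Quotient.mk_eq_zero] at this
    let P : Submodule A M :=
      { carrier := (m • ⊤ : Submodule ↥Z M)
        add_mem' := fun h1 h2 => Submodule.add_mem _ h1 h2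
        zero_mem' := Submodule.zero_mem _
        smul_mem' := by
          intro x v hv
          show x • v ∈ (m • ⊤ : Submodule ↥Z M)
          refine Submodule.smul_induction_on hv ?_ ?_
          · intro z hz w _
            have : x • ((z : ↥Z) • w) = z • (x • w) := by
              show x • ((z : A) • w) = (z : A) • (x • w)
              rw [← mul_smul, ← mul_smul, (hcentral z.2).comm x]
            rw [this]
            exact Submodule.smul_mem_smul hz Submodule.mem_top
          · intro v w hv hw
            rw [smul_add]
            exact Submodule.add_mem _ hv hw }
    have hPne : P ≠ ⊤ := by
      intro h
      apply hN.1
      rw [eq_top_iff]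
      intro v _
      have hv : v ∈ P := h ▸ Submodule.mem_top
      exact hle hv
    have hPbot : P = ⊥ := (eq_bot_or_eq_top P).resolve_right hPne
    intro z hz v
    have hv : z • v ∈ P :=
      (Submodule.smul_mem_smul hz Submodule.mem_top : z • v ∈ (m • ⊤ : Submodule ↥Z M))
    rw [hPbot] at hv
    exact Submodule.mem_bot _ |>.mp hv
  -- every z in Z acts on M by a scalar
  have hscalar : ∀ z : ↥Z, ∃ lam : K, ∀ v : M, z • v = lam • v := by
    intro z
    obtain ⟨lam, hmem⟩ := stmt_1_aux K ↥Z m z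
    refine ⟨lam, fun v => ?_⟩
    have h0 := hann _ hmem v
    rw [sub_smul, sub_eq_zero] at h0
    have halg : (algebraMap K ↥Z lam) • v = lam • v := by
      show ((algebraMap K ↥Z lam : ↥Z) : A) • v = lam • v
      rw [Subalgebra.coe_algebraMap, algebraMap_smul]
    rw [h0, halg]
  -- conclude: M is spanned over K by the a i • m₀
  have hmemK : ∀ x : A, x • m₀ ∈ Submodule.span K (Set.range fun i => a i • m₀) := by
    intro x
    have hx : x ∈ Submodule.span ↥Z (Set.range a) := hgen ▸ Submodule.mem_top
    induction hx using Submodule.span_induction with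
    | mem x hx => obtain ⟨i, rfl⟩ := hx; exact Submodule.subset_span ⟨i, rfl⟩
    | zero => rw [zero_smul]; exact Submodule.zero_mem _
    | add x y _ _ hx hy => rw [add_smul]; exact Submodule.add_mem _ hx hy
    | smul z x _ hx =>
        obtain ⟨lam, hlam⟩ := hscalar z
        rw [hzsmul, hlam]
        exact Submodule.smul_mem _ lam hx
  have hspanK : Submodule.span K (Set.range fun i => a i • m₀) = ⊤ := by
    rw [eq_top_iff]
    intro v _
    obtain ⟨x, rfl⟩ := hsurjA v
    exact hmemK x
  constructor
  · exact ⟨⟨(Set.finite_range _).toFinset, by rw [Set.Finite.coe_toFinset]; exact hspanK⟩⟩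
  · exact (finrank_le_of_span_eq_top hspanK).trans (by simp)
end

section
/- Let K be a field of characteristic p > 0 and H a commutative Hopf algebra over K with augmentation ideal I = ker ε. Let k ≥ 1 and let δ : H → K be a K-linear functional with δ(1) = 0 and δ(I^{k+1}) = 0 (i.e. δ ∈ Di_k^+(H)). Then the p-th power of δ under the convolution product satisfies δ^p(I^{pk}) = 0 and δ^p(1) = 0; that is, δ^p ∈ Di_{pk−1}^+(H). -/
open TensorProduct

section Dist

variable (K : Type*) [Field K] (H : Type*) [CommRing H] [HopfAlgebra K H]

/-- The convolution product `μρ = (μ ⊗ ρ) ∘ Δ` of two linear functionals on `H`. -/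
noncomputable def conv (μ ρ : Module.Dual K H) : Module.Dual K H :=
  (LinearMap.mul' K K) ∘ₗ (TensorProduct.map μ ρ) ∘ₗ (Coalgebra.comul (R := K) (A := H))

/-- The `n`-fold convolution power of a linear functional on `H`
(with unit the counit `ε`). -/
noncomputable def convPow (δ : Module.Dual K H) : ℕ → Module.Dual K H
  | 0 => Coalgebra.counit
  | n + 1 => conv K H (convPow δ n) δ

/-- The augmentation ideal `I = ker ε` of `H`. -/
noncomputable def augIdeal : Ideal H :=
  RingHom.ker ((Bialgebra.counitAlgHom K H : H →ₐ[K] K) : H →+* K)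

end Dist

namespace Stmt5

variable {K : Type*} [Field K] {H : Type*} [CommRing H] [HopfAlgebra K H]

lemma prod_mem_pow (y : ℕ → H) (hy : ∀ i, y i ∈ augIdeal K H) (S : Finset ℕ) :
    (∏ i ∈ S, y i) ∈ (augIdeal K H) ^ S.card := by
  classical
  induction S using Finset.induction_on with
  | empty => simp [Ideal.one_eq_top]
  | insert a s hi ih =>
    rw [Finset.prod_insert hi, Finset.card_insert_of_notMem hi, pow_succ']
    exact Ideal.mul_mem_mul (hy a) ih

lemma mem_span_prods {n : ℕ} (hn : 1 ≤ n) {x : H} (hx : x ∈ (augIdeal K H) ^ n) :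
    x ∈ Submodule.span K {z : H | ∃ l : List H,
      l.length = n ∧ (∀ a ∈ l, a ∈ augIdeal K H) ∧ l.prod = z} := by
  induction n generalizing x with
  | zero => omega
  | succ n ih =>
    rcases Nat.eq_or_lt_of_le hn with h1 | h1
    · -- n + 1 = 1
      obtain rfl : n = 0 := by omega
      rw [pow_one] at hx
      exact Submodule.subset_span ⟨[x], rfl, by simpa using hx, by simp⟩
    · have hn' : 1 ≤ n := by omega
      rw [pow_succ] at hx
      refine Submodule.mul_induction_on hx (fun a ha b hb => ?_) (fun u v hu hv => add_mem hu hv)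
      have ha' := ih hn' ha
      refine Submodule.span_induction (p := fun a _ => a * b ∈ Submodule.span K
        {z : H | ∃ l : List H, l.length = n + 1 ∧ (∀ a ∈ l, a ∈ augIdeal K H) ∧ l.prod = z})
        (fun z hz => ?_) (by simp) (fun u v _ _ h1 h2 => by rw [add_mul]; exact add_mem h1 h2)
        (fun c u _ h => by rw [smul_mul_assoc]; exact Submodule.smul_mem _ _ h) ha'
      obtain ⟨l, hlen, hmem, hprod⟩ := hz
      refine Submodule.subset_span ⟨l ++ [b], by simp [hlen], ?_, by simp [hprod]⟩
      intro a ha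
      rcases List.mem_append.1 ha with h | h
      · exact hmem a h
      · rw [List.mem_singleton] at h
        exact h ▸ hb

lemma min_cond {S B : Finset ℕ} (hS : S.Nonempty) (hB : B.Nonempty) (hBS : B ⊆ S) :
    B.min = S.min ↔ S.min' hS ∈ B := by
  constructor
  · intro h
    have h' : B.min' hB = S.min' hS := by
      have := (Finset.coe_min' hB).trans (h.trans (Finset.coe_min' hS).symm)
      exact_mod_cast this
    exact h' ▸ Finset.min'_mem B hB
  · intro h
    have h1 : B.min' hB ≤ S.min' hS := Finset.min'_le B _ h
    have h2 : S.min' hS ≤ B.min' hB := Finset.min'_le S _ (hBS (Finset.min'_mem B hB))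
    rw [← Finset.coe_min' hB, ← Finset.coe_min' hS, le_antisymm h1 h2]

lemma mem_augIdeal {x : H} : x ∈ augIdeal K H ↔ (Coalgebra.counit (R := K) x = 0) := Iff.rfl

noncomputable def ITI (K : Type*) [Field K] {H : Type*} [CommRing H] [HopfAlgebra K H] :
    Submodule K (H ⊗[K] H) :=
  Submodule.span K {z | ∃ a ∈ augIdeal K H, ∃ b ∈ augIdeal K H, z = a ⊗ₜ[K] b}

lemma comul_sub_mem_ITI {x : H} (hx : x ∈ augIdeal K H) :
    Coalgebra.comul (R := K) x - x ⊗ₜ[K] 1 - 1 ⊗ₜ[K] x ∈ ITI K := by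
  classical
  obtain ⟨s, hs⟩ := TensorProduct.exists_finset (Coalgebra.comul (R := K) x)
  set ε : H →ₗ[K] K := Coalgebra.counit with hε
  have hεx : ε x = 0 := hx
  -- the two counit identities
  have hright : ∑ p ∈ s, ε p.2 • p.1 = x := by
    have h1 := Coalgebra.lTensor_counit_comul (R := K) x
    rw [hs, map_sum] at h1
    have h2 := congrArg (TensorProduct.rid K H) h1
    simpa [TensorProduct.rid_tmul] using h2
  have hleft : ∑ p ∈ s, ε p.1 • p.2 = x := by
    have h1 := Coalgebra.rTensor_counit_comul (R := K) x
    rw [hs, map_sum] at h1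
    have h2 := congrArg (TensorProduct.lid K H) h1
    simpa [TensorProduct.lid_tmul] using h2
  have hεsum : ∑ p ∈ s, ε p.1 * ε p.2 = 0 := by
    have := congrArg ε hright
    rw [map_sum] at this
    simp only [map_smul, smul_eq_mul] at this
    rw [hεx] at this
    calc ∑ p ∈ s, ε p.1 * ε p.2 = ∑ p ∈ s, ε p.2 * ε p.1 := by
          exact Finset.sum_congr rfl fun p _ => mul_comm _ _
      _ = 0 := this
  have key : Coalgebra.comul (R := K) x - x ⊗ₜ[K] 1 - 1 ⊗ₜ[K] x
      = ∑ p ∈ s, (p.1 - ε p.1 • 1) ⊗ₜ[K] (p.2 - ε p.2 • 1) := by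
    have expand : ∀ p : H × H, (p.1 - ε p.1 • 1) ⊗ₜ[K] (p.2 - ε p.2 • 1)
        = p.1 ⊗ₜ[K] p.2 - (ε p.2 • p.1) ⊗ₜ[K] (1:H) - (1:H) ⊗ₜ[K] (ε p.1 • p.2)
          + (ε p.1 * ε p.2) • ((1:H) ⊗ₜ[K] (1:H)) := by
      intro p
      simp only [TensorProduct.sub_tmul, TensorProduct.tmul_sub, ← TensorProduct.smul_tmul',
        TensorProduct.tmul_smul, smul_smul]
      module
    rw [Finset.sum_congr rfl (fun p _ => expand p)]
    rw [Finset.sum_add_distrib, Finset.sum_sub_distrib, Finset.sum_sub_distrib]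
    rw [← TensorProduct.sum_tmul, ← TensorProduct.tmul_sum, ← Finset.sum_smul]
    rw [hright, hleft, hεsum, hs]
    simp
  rw [key]
  refine Submodule.sum_mem _ fun p _ => Submodule.subset_span ⟨_, ?_, _, ?_, rfl⟩
  · rw [mem_augIdeal]; simp [hε]
  · rw [mem_augIdeal]; simp [hε]

noncomputable def Rem (K : Type*) [Field K] {H : Type*} [CommRing H] [HopfAlgebra K H]
    (y : ℕ → H) (S : Finset ℕ) : Submodule K (H ⊗[K] H) :=
  Submodule.span K {z | ∃ A B : Finset ℕ, A ⊆ S ∧ B ⊆ S ∧ Disjoint A B ∧ A ∪ B ≠ S ∧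
    ∃ u v : H, u ∈ (augIdeal K H) ^ (S.card - (A ∪ B).card) ∧
      v ∈ (augIdeal K H) ^ (S.card - (A ∪ B).card) ∧
      z = ((∏ i ∈ A, y i) * u) ⊗ₜ[K] ((∏ i ∈ B, y i) * v)}

section Helpers

variable (y : ℕ → H) (hy : ∀ i, y i ∈ augIdeal K H)
variable {s : Finset ℕ} {a : ℕ} (ha : a ∉ s)

include ha hy in
lemma comul_mul_rem {z : H ⊗[K] H} (hz : z ∈ Rem K y s) :
    Coalgebra.comul (R := K) (y a) * z ∈ Rem K y (insert a s) := by
  classical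
  induction hz using Submodule.span_induction with
  | zero => rw [mul_zero]; exact zero_mem _
  | add u v _ _ h1 h2 => rw [mul_add]; exact add_mem h1 h2
  | smul c u _ h => rw [mul_smul_comm]; exact Submodule.smul_mem _ _ h
  | mem g hg =>
    obtain ⟨A, B, hA, hB, hdisj, hne, u, v, hu, hv, rfl⟩ := hg
    have haA : a ∉ A := fun h => ha (hA h)
    have haB : a ∉ B := fun h => ha (hB h)
    have haAB : a ∉ A ∪ B := by simp [haA, haB]
    have hABs : A ∪ B ⊆ s := Finset.union_subset hA hB
    have hlt : (A ∪ B).card < s.card :=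
      Finset.card_lt_card (Finset.ssubset_iff_subset_ne.2 ⟨hABs, hne⟩)
    have hcins : (insert a s).card = s.card + 1 := Finset.card_insert_of_notMem ha
    -- decompose comul (y a)
    have hdec : Coalgebra.comul (R := K) (y a)
        = y a ⊗ₜ[K] 1 + 1 ⊗ₜ[K] y a
          + (Coalgebra.comul (R := K) (y a) - y a ⊗ₜ[K] 1 - 1 ⊗ₜ[K] y a) := by ring
    rw [hdec, add_mul, add_mul]
    refine add_mem (add_mem ?_ ?_) ?_
    · -- (y a ⊗ 1) * g
      rw [Algebra.TensorProduct.tmul_mul_tmul, one_mul, ← mul_assoc,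
        ← Finset.prod_insert haA]
      refine Submodule.subset_span ⟨insert a A, B, ?_, ?_, ?_, ?_, u, v, ?_, ?_, rfl⟩
      · exact Finset.insert_subset_insert a hA
      · exact hB.trans (Finset.subset_insert a s)
      · exact Finset.disjoint_insert_left.2 ⟨haB, hdisj⟩
      · intro h
        have : (insert a A ∪ B).card = (insert a s).card := by rw [h]
        rw [Finset.insert_union, Finset.card_insert_of_notMem haAB, hcins] at this
        omega
      · have : (insert a s).card - (insert a A ∪ B).card = s.card - (A ∪ B).card := by
          rw [Finset.insert_union, Finset.card_insert_of_notMem haAB, hcins]; omega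
        rwa [this]
      · have : (insert a s).card - (insert a A ∪ B).card = s.card - (A ∪ B).card := by
          rw [Finset.insert_union, Finset.card_insert_of_notMem haAB, hcins]; omega
        rwa [this]
    · -- (1 ⊗ y a) * g
      rw [Algebra.TensorProduct.tmul_mul_tmul, one_mul, ← mul_assoc,
        ← Finset.prod_insert haB]
      refine Submodule.subset_span ⟨A, insert a B, ?_, ?_, ?_, ?_, u, v, ?_, ?_, rfl⟩
      · exact hA.trans (Finset.subset_insert a s)
      · exact Finset.insert_subset_insert a hB
      · exact Finset.disjoint_insert_right.2 ⟨haA, hdisj⟩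
      · intro h
        have : (A ∪ insert a B).card = (insert a s).card := by rw [h]
        rw [Finset.union_insert, Finset.card_insert_of_notMem haAB, hcins] at this
        omega
      · have : (insert a s).card - (A ∪ insert a B).card = s.card - (A ∪ B).card := by
          rw [Finset.union_insert, Finset.card_insert_of_notMem haAB, hcins]; omega
        rwa [this]
      · have : (insert a s).card - (A ∪ insert a B).card = s.card - (A ∪ B).card := by
          rw [Finset.union_insert, Finset.card_insert_of_notMem haAB, hcins]; omega
        rwa [this]
    · -- e * g with e ∈ ITI
      have he := comul_sub_mem_ITI (K := K) (hy a)
      set g := ((∏ i ∈ A, y i) * u) ⊗ₜ[K] ((∏ i ∈ B, y i) * v) with hg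
      set e := Coalgebra.comul (R := K) (y a) - y a ⊗ₜ[K] 1 - 1 ⊗ₜ[K] y a with hedef
      clear_value e
      clear hedef hdec
      induction he using Submodule.span_induction with
      | zero => rw [zero_mul]; exact zero_mem _
      | add u' v' _ _ h1 h2 => rw [add_mul]; exact add_mem h1 h2
      | smul c u' _ h => rw [smul_mul_assoc]; exact Submodule.smul_mem _ _ h
      | mem w hw =>
        obtain ⟨α, hαI, β, hβI, rfl⟩ := hw
        rw [hg, Algebra.TensorProduct.tmul_mul_tmul]
        have e1 : α * ((∏ i ∈ A, y i) * u) = (∏ i ∈ A, y i) * (u * α) := by ring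
        have e2 : β * ((∏ i ∈ B, y i) * v) = (∏ i ∈ B, y i) * (v * β) := by ring
        rw [e1, e2]
        refine Submodule.subset_span ⟨A, B, hA.trans (Finset.subset_insert a s),
          hB.trans (Finset.subset_insert a s), hdisj, ?_, u * α, v * β, ?_, ?_, rfl⟩
        · intro h
          exact haAB (h ▸ Finset.mem_insert_self a s)
        · have hc : (insert a s).card - (A ∪ B).card = (s.card - (A ∪ B).card) + 1 := by
            rw [hcins]; omega
          rw [hc, pow_succ]
          exact Ideal.mul_mem_mul hu hαI
        · have hc : (insert a s).card - (A ∪ B).card = (s.card - (A ∪ B).card) + 1 := by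
            rw [hcins]; omega
          rw [hc, pow_succ]
          exact Ideal.mul_mem_mul hv hβI

include ha in
lemma iti_mul_T {e : H ⊗[K] H} (he : e ∈ ITI K) {B : Finset ℕ} (hB : B ⊆ s) :
    e * ((∏ i ∈ s \ B, y i) ⊗ₜ[K] (∏ i ∈ B, y i)) ∈ Rem K y (insert a s) := by
  classical
  induction he using Submodule.span_induction with
  | zero => rw [zero_mul]; exact zero_mem _
  | add u' v' _ _ h1 h2 => rw [add_mul]; exact add_mem h1 h2
  | smul c u' _ h => rw [smul_mul_assoc]; exact Submodule.smul_mem _ _ h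
  | mem w hw =>
    obtain ⟨α, hαI, β, hβI, rfl⟩ := hw
    rw [Algebra.TensorProduct.tmul_mul_tmul, mul_comm α, mul_comm β]
    have hcard : (insert a s).card - ((s \ B) ∪ B).card = 1 := by
      rw [Finset.sdiff_union_of_subset hB, Finset.card_insert_of_notMem ha]
      omega
    refine Submodule.subset_span ⟨s \ B, B, (Finset.sdiff_subset).trans (Finset.subset_insert a s),
      hB.trans (Finset.subset_insert a s), Finset.sdiff_disjoint, ?_, α, β, ?_, ?_, rfl⟩
    · rw [Finset.sdiff_union_of_subset hB]
      intro h
      exact ha (h ▸ Finset.mem_insert_self a s)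
    · rwa [hcard, pow_one]
    · rwa [hcard, pow_one]

end Helpers

lemma exp_mem (y : ℕ → H) (hy : ∀ i, y i ∈ augIdeal K H) (S : Finset ℕ) :
    Coalgebra.comul (R := K) (∏ i ∈ S, y i)
      - ∑ B ∈ S.powerset, (∏ i ∈ S \ B, y i) ⊗ₜ[K] (∏ i ∈ B, y i) ∈ Rem K y S := by
  classical
  induction S using Finset.induction_on with
  | empty =>
    rw [Finset.prod_empty, Finset.powerset_empty, Finset.sum_singleton]
    simp [Algebra.TensorProduct.one_def]
  | insert a s hi ih =>
    set T := ∑ B ∈ s.powerset, (∏ i ∈ s \ B, y i) ⊗ₜ[K] (∏ i ∈ B, y i) with hT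
    set r := Coalgebra.comul (R := K) (∏ i ∈ s, y i) - T with hr
    have hco : Coalgebra.comul (R := K) (∏ i ∈ insert a s, y i)
        = Coalgebra.comul (R := K) (y a) * (T + r) := by
      rw [Finset.prod_insert hi, Bialgebra.comul_mul, hr]
      ring
    -- split comul (y a)
    have hsplit : Coalgebra.comul (R := K) (y a) * (T + r)
        = (y a ⊗ₜ[K] 1) * T + (1 ⊗ₜ[K] y a) * T
          + ((Coalgebra.comul (R := K) (y a) - y a ⊗ₜ[K] 1 - 1 ⊗ₜ[K] y a) * T
            + Coalgebra.comul (R := K) (y a) * r) := by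
      ring
    -- the new main-term sum
    have hTnew : ∑ B ∈ (insert a s).powerset,
          (∏ i ∈ insert a s \ B, y i) ⊗ₜ[K] (∏ i ∈ B, y i)
        = (y a ⊗ₜ[K] 1) * T + (1 ⊗ₜ[K] y a) * T := by
      rw [Finset.sum_powerset_insert hi]
      congr 1
      · rw [hT, Finset.mul_sum]
        refine Finset.sum_congr rfl fun B hB => ?_
        rw [Finset.mem_powerset] at hB
        have haB : a ∉ B := fun h => hi (hB h)
        rw [Finset.insert_sdiff_of_notMem _ haB,
          Finset.prod_insert (fun h => hi (Finset.mem_sdiff.1 h).1),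
          Algebra.TensorProduct.tmul_mul_tmul, one_mul]
      · rw [hT, Finset.mul_sum]
        refine Finset.sum_congr rfl fun B hB => ?_
        rw [Finset.mem_powerset] at hB
        have haB : a ∉ B := fun h => hi (hB h)
        have h1 : insert a s \ insert a B = s \ B := by
          rw [Finset.insert_sdiff_insert, Finset.sdiff_insert,
            Finset.erase_eq_of_notMem (fun h => hi (Finset.mem_sdiff.1 h).1)]
        rw [h1, Finset.prod_insert haB, Algebra.TensorProduct.tmul_mul_tmul, one_mul]
    rw [hco, hsplit, hTnew]
    have goal_eq : (y a ⊗ₜ[K] 1) * T + (1 ⊗ₜ[K] y a) * T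
          + ((Coalgebra.comul (R := K) (y a) - y a ⊗ₜ[K] 1 - 1 ⊗ₜ[K] y a) * T
            + Coalgebra.comul (R := K) (y a) * r)
          - ((y a ⊗ₜ[K] 1) * T + (1 ⊗ₜ[K] y a) * T)
        = (Coalgebra.comul (R := K) (y a) - y a ⊗ₜ[K] 1 - 1 ⊗ₜ[K] y a) * T
            + Coalgebra.comul (R := K) (y a) * r := by ring
    rw [goal_eq]
    refine add_mem ?_ (comul_mul_rem y hy hi ih)
    rw [hT, Finset.mul_sum]
    refine Submodule.sum_mem _ fun B hB => ?_
    exact iti_mul_T y hi (comul_sub_mem_ITI (hy a)) (Finset.mem_powerset.1 hB)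

lemma convPow_succ_apply (δ : Module.Dual K H) (m : ℕ) (x : H) :
    convPow K H δ (m + 1) x =
      LinearMap.mul' K K (TensorProduct.map (convPow K H δ m) δ (Coalgebra.comul x)) := rfl

section Main

variable {δ : Module.Dual K H} {k : ℕ} (hk : 1 ≤ k)
  (hδ1 : δ 1 = 0) (hδI : ∀ f ∈ (augIdeal K H) ^ (k + 1), δ f = 0)

lemma psi_tmul (μ : Module.Dual K H) (x z : H) :
    LinearMap.mul' K K (TensorProduct.map μ δ (x ⊗ₜ[K] z)) = μ x * δ z := by
  simp [TensorProduct.map_tmul, LinearMap.mul'_apply]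

include hδI in
lemma psi_kill_Rem (m : ℕ)
    (Vm : ∀ f ∈ (augIdeal K H) ^ (m * k + 1), convPow K H δ m f = 0)
    (y : ℕ → H) (hy : ∀ i, y i ∈ augIdeal K H) (S : Finset ℕ)
    (hS : (m + 1) * k ≤ S.card) {z : H ⊗[K] H} (hz : z ∈ Rem K y S) :
    LinearMap.mul' K K (TensorProduct.map (convPow K H δ m) δ z) = 0 := by
  classical
  induction hz using Submodule.span_induction with
  | zero => simp
  | add u v _ _ h1 h2 => rw [map_add, map_add, h1, h2, add_zero]
  | smul c u _ h => rw [map_smul, map_smul, h, smul_zero]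
  | mem g hg =>
    obtain ⟨A, B, hA, hB, hdisj, hne, u, v, hu, hv, rfl⟩ := hg
    rw [psi_tmul]
    have hABs : A ∪ B ⊆ S := Finset.union_subset hA hB
    have hlt : (A ∪ B).card < S.card :=
      Finset.card_lt_card (Finset.ssubset_iff_subset_ne.2 ⟨hABs, hne⟩)
    have hcardU : (A ∪ B).card = A.card + B.card := Finset.card_union_of_disjoint hdisj
    set c := S.card - (A ∪ B).card with hc
    have hc1 : 1 ≤ c := by omega
    have hmemA : (∏ i ∈ A, y i) * u ∈ (augIdeal K H) ^ (A.card + c) := by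
      rw [pow_add]; exact Ideal.mul_mem_mul (prod_mem_pow y hy A) hu
    have hmemB : (∏ i ∈ B, y i) * v ∈ (augIdeal K H) ^ (B.card + c) := by
      rw [pow_add]; exact Ideal.mul_mem_mul (prod_mem_pow y hy B) hv
    have hSk : m * k + k ≤ S.card := by
      have : (m + 1) * k = m * k + k := by ring
      omega
    by_cases hble : B.card + c ≤ k
    · have hA1 : m * k + 1 ≤ A.card + c := by
        generalize m * k = M at hSk ⊢
        omega
      rw [Vm _ (Ideal.pow_le_pow_right hA1 hmemA), zero_mul]
    · have hB1 : k + 1 ≤ B.card + c := by omega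
      rw [hδI _ (Ideal.pow_le_pow_right hB1 hmemB), mul_zero]

include hδI in
lemma conv_succ_prod_eq (m : ℕ)
    (Vm : ∀ f ∈ (augIdeal K H) ^ (m * k + 1), convPow K H δ m f = 0)
    (y : ℕ → H) (hy : ∀ i, y i ∈ augIdeal K H) (S : Finset ℕ)
    (hS : S.card = (m + 1) * k) :
    convPow K H δ (m + 1) (∏ i ∈ S, y i) =
      ∑ B ∈ S.powersetCard k, convPow K H δ m (∏ i ∈ S \ B, y i) * δ (∏ i ∈ B, y i) := by
  classical
  rw [convPow_succ_apply]
  have hco : Coalgebra.comul (R := K) (∏ i ∈ S, y i)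
      = (∑ B ∈ S.powerset, (∏ i ∈ S \ B, y i) ⊗ₜ[K] (∏ i ∈ B, y i))
        + (Coalgebra.comul (R := K) (∏ i ∈ S, y i)
          - ∑ B ∈ S.powerset, (∏ i ∈ S \ B, y i) ⊗ₜ[K] (∏ i ∈ B, y i)) := by ring
  rw [hco, map_add, map_add,
    psi_kill_Rem hδI m Vm y hy S (le_of_eq hS.symm) (exp_mem y hy S), add_zero,
    map_sum, map_sum]
  have hterm : ∀ B ∈ S.powerset,
      LinearMap.mul' K K (TensorProduct.map (convPow K H δ m) δ
        ((∏ i ∈ S \ B, y i) ⊗ₜ[K] (∏ i ∈ B, y i)))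
      = convPow K H δ m (∏ i ∈ S \ B, y i) * δ (∏ i ∈ B, y i) :=
    fun B _ => psi_tmul _ _ _
  rw [Finset.sum_congr rfl hterm, Finset.powersetCard_eq_filter]
  refine (Finset.sum_filter_of_ne fun B hB hne => ?_).symm
  rw [Finset.mem_powerset] at hB
  by_contra hcard
  apply hne
  have hsd : (S \ B).card = S.card - B.card := Finset.card_sdiff_of_subset hB
  have hBle : B.card ≤ S.card := Finset.card_le_card hB
  by_cases hbk : B.card ≤ k
  · have h1 : m * k + 1 ≤ (S \ B).card := by
      have : (m + 1) * k = m * k + k := by ring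
      generalize m * k = M at *
      omega
    rw [Vm _ (Ideal.pow_le_pow_right h1 (prod_mem_pow y hy _)), zero_mul]
  · have h1 : k + 1 ≤ B.card := by omega
    rw [hδI _ (Ideal.pow_le_pow_right h1 (prod_mem_pow y hy _)), mul_zero]

include hδI in
lemma conv_succ_prod_zero (m : ℕ)
    (Vm : ∀ f ∈ (augIdeal K H) ^ (m * k + 1), convPow K H δ m f = 0)
    (y : ℕ → H) (hy : ∀ i, y i ∈ augIdeal K H) (S : Finset ℕ)
    (hS : (m + 1) * k + 1 ≤ S.card) :
    convPow K H δ (m + 1) (∏ i ∈ S, y i) = 0 := by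
  classical
  rw [convPow_succ_apply]
  have hco : Coalgebra.comul (R := K) (∏ i ∈ S, y i)
      = (∑ B ∈ S.powerset, (∏ i ∈ S \ B, y i) ⊗ₜ[K] (∏ i ∈ B, y i))
        + (Coalgebra.comul (R := K) (∏ i ∈ S, y i)
          - ∑ B ∈ S.powerset, (∏ i ∈ S \ B, y i) ⊗ₜ[K] (∏ i ∈ B, y i)) := by ring
  rw [hco, map_add, map_add,
    psi_kill_Rem hδI m Vm y hy S (by omega) (exp_mem y hy S), add_zero, map_sum, map_sum]
  refine Finset.sum_eq_zero fun B hB => ?_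
  rw [Finset.mem_powerset] at hB
  rw [psi_tmul]
  have hsd : (S \ B).card = S.card - B.card := Finset.card_sdiff_of_subset hB
  have hBle : B.card ≤ S.card := Finset.card_le_card hB
  by_cases hbk : B.card ≤ k
  · have h1 : m * k + 1 ≤ (S \ B).card := by
      have : (m + 1) * k = m * k + k := by ring
      generalize m * k = M at *
      omega
    rw [Vm _ (Ideal.pow_le_pow_right h1 (prod_mem_pow y hy _)), zero_mul]
  · have h1 : k + 1 ≤ B.card := by omega
    rw [hδI _ (Ideal.pow_le_pow_right h1 (prod_mem_pow y hy _)), mul_zero]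

lemma prod_range_getD (l : List H) :
    ∏ i ∈ Finset.range l.length, l.getD i 0 = l.prod := by
  induction l with
  | nil => simp
  | cons a l ih =>
    rw [List.length_cons, Finset.prod_range_succ']
    simp only [List.getD_cons_succ, List.getD_cons_zero]
    rw [ih, List.prod_cons, mul_comm]

include hk hδ1 hδI in
lemma V_all (m : ℕ) : ∀ f ∈ (augIdeal K H) ^ (m * k + 1), convPow K H δ m f = 0 := by
  classical
  induction m with
  | zero =>
    intro f hf
    rw [zero_mul, zero_add, pow_one] at hf
    exact hf
  | succ m ih =>
    intro f hf
    have hn : 1 ≤ (m + 1) * k + 1 := by omega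
    have hsp := mem_span_prods hn hf
    have : f ∈ LinearMap.ker (convPow K H δ (m + 1)) := by
      refine Submodule.span_le.2 ?_ hsp
      rintro z ⟨l, hlen, hmem, rfl⟩
      rw [SetLike.mem_coe, LinearMap.mem_ker]
      set y : ℕ → H := fun i => l.getD i 0 with hy'
      have hy : ∀ i, y i ∈ augIdeal K H := by
        intro i
        show l.getD i 0 ∈ augIdeal K H
        by_cases hi : i < l.length
        · rw [List.getD_eq_getElem l 0 hi]
          exact hmem _ (List.getElem_mem hi)
        · rw [List.getD_eq_default l 0 (by omega)]
          exact zero_mem _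
      have hprod : l.prod = ∏ i ∈ Finset.range l.length, y i := (prod_range_getD l).symm
      rw [hprod]
      refine conv_succ_prod_zero hδI m ih y hy _ ?_
      rw [Finset.card_range, hlen]
    exact this

end Main

noncomputable def Pf (δ : H →ₗ[K] K) (y : ℕ → H) (k : ℕ) : ℕ → Finset ℕ → K
  | 0, S => if S = ∅ then 1 else 0
  | (m+1), S => ∑ B ∈ S.powersetCard k,
      if B.min = S.min then δ (∏ i ∈ B, y i) * Pf δ y k m (S \ B) else 0

lemma Pf_zero (δ : H →ₗ[K] K) (y : ℕ → H) (k : ℕ) (S : Finset ℕ) :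
    Pf δ y k 0 S = if S = ∅ then 1 else 0 := rfl

lemma Pf_succ (δ : H →ₗ[K] K) (y : ℕ → H) (k m : ℕ) (S : Finset ℕ) :
    Pf δ y k (m+1) S = ∑ B ∈ S.powersetCard k,
      if B.min = S.min then δ (∏ i ∈ B, y i) * Pf δ y k m (S \ B) else 0 := rfl

lemma pc_empty {k : ℕ} (hk : 1 ≤ k) : (∅ : Finset ℕ).powersetCard k = ∅ := by
  ext B
  simp only [Finset.mem_powersetCard, Finset.subset_empty, Finset.notMem_empty, iff_false,
    not_and]
  rintro rfl
  simp
  omega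

lemma pc_sdiff (S T : Finset ℕ) (k : ℕ) (hT : T ⊆ S) :
    T.powersetCard k = (S.powersetCard k).filter (· ⊆ T) := by
  ext B
  simp only [Finset.mem_powersetCard, Finset.mem_filter]
  constructor
  · exact fun ⟨h1, h2⟩ => ⟨⟨h1.trans hT, h2⟩, h1⟩
  · exact fun ⟨⟨_, h2⟩, h3⟩ => ⟨h3, h2⟩

lemma Pf_succ' (δ : H →ₗ[K] K) (y : ℕ → H) {k : ℕ} (hk : 1 ≤ k) (m : ℕ)
    {S : Finset ℕ} (hS : S.Nonempty) :
    Pf δ y k (m+1) S = ∑ B ∈ S.powersetCard k,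
      if S.min' hS ∈ B then δ (∏ i ∈ B, y i) * Pf δ y k m (S \ B) else 0 := by
  rw [Pf_succ]
  refine Finset.sum_congr rfl fun B hB => ?_
  rw [Finset.mem_powersetCard] at hB
  have hBne : B.Nonempty := Finset.card_pos.1 (by omega)
  exact if_congr (min_cond hS hBne hB.1) rfl rfl

lemma KL (δ : H →ₗ[K] K) (y : ℕ → H) {k : ℕ} (hk : 1 ≤ k) (m : ℕ) (S : Finset ℕ) :
    ∑ B ∈ S.powersetCard k, δ (∏ i ∈ B, y i) * Pf δ y k m (S \ B)
      = (m + 1) • Pf δ y k (m + 1) S := by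
  classical
  induction m generalizing S with
  | zero =>
    rw [zero_add, one_smul, Pf_succ]
    refine Finset.sum_congr rfl fun B hB => ?_
    rw [Finset.mem_powersetCard] at hB
    by_cases hSB : S \ B = ∅
    · have hBS : B = S :=
        Finset.Subset.antisymm hB.1 (Finset.sdiff_eq_empty_iff_subset.1 hSB)
      rw [if_pos (by rw [hBS])]
    · rw [Pf_zero, if_neg hSB, mul_zero]
      split <;> rfl
  | succ m ih =>
    rcases Finset.eq_empty_or_nonempty S with rfl | hS
    · rw [pc_empty hk, Finset.sum_empty, Pf_succ, pc_empty hk, Finset.sum_empty, smul_zero]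
    set a := S.min' hS with hadef
    have haS : a ∈ S := S.min'_mem hS
    rw [← Finset.sum_filter_add_sum_filter_not (S.powersetCard k) (fun B => a ∈ B)]
    -- Part 1
    have part1 : ∑ B ∈ (S.powersetCard k).filter (fun B => a ∈ B),
        δ (∏ i ∈ B, y i) * Pf δ y k (m+1) (S \ B) = Pf δ y k (m+1+1) S := by
      rw [Pf_succ' δ y hk (m+1) hS, ← hadef, ← Finset.sum_filter]
    -- Part 2
    have part2 : ∑ B ∈ (S.powersetCard k).filter (fun B => ¬ a ∈ B),
        δ (∏ i ∈ B, y i) * Pf δ y k (m+1) (S \ B)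
          = (m+1) • Pf δ y k (m+1+1) S := by
      rw [Finset.sum_filter]
      have step1 : ∀ B ∈ S.powersetCard k,
          (if a ∉ B then δ (∏ i ∈ B, y i) * Pf δ y k (m+1) (S \ B) else 0)
          = ∑ C ∈ S.powersetCard k,
              (if a ∉ B then if C ⊆ S \ B then if a ∈ C then
                  δ (∏ i ∈ B, y i) * (δ (∏ i ∈ C, y i) * Pf δ y k m ((S \ B) \ C))
                else 0 else 0 else 0) := by
        intro B hB
        by_cases haB : a ∉ B
        · rw [if_pos haB]
          have hamem : a ∈ S \ B := Finset.mem_sdiff.2 ⟨haS, haB⟩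
          have hane : (S \ B).Nonempty := ⟨a, hamem⟩
          have hmin' : (S \ B).min' hane = a := le_antisymm
            (Finset.min'_le _ _ hamem)
            (Finset.le_min' _ _ _ fun x hx => Finset.min'_le S x (Finset.mem_sdiff.1 hx).1)
          rw [Pf_succ' δ y hk m hane, pc_sdiff S (S \ B) k Finset.sdiff_subset,
            Finset.sum_filter, Finset.mul_sum]
          refine Finset.sum_congr rfl fun C hC => ?_
          rw [if_pos haB]
          by_cases hCB : C ⊆ S \ B
          · rw [if_pos hCB, if_pos hCB]
            simp only [hmin']
            rw [mul_ite, mul_zero]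
          · rw [if_neg hCB, if_neg hCB, mul_zero]
        · rw [if_neg haB]
          symm
          refine Finset.sum_eq_zero fun C hC => ?_
          rw [if_neg haB]
      rw [Finset.sum_congr rfl step1, Finset.sum_comm]
      have step2 : ∀ C ∈ S.powersetCard k,
          (∑ B ∈ S.powersetCard k,
            if a ∉ B then if C ⊆ S \ B then if a ∈ C then
                δ (∏ i ∈ B, y i) * (δ (∏ i ∈ C, y i) * Pf δ y k m ((S \ B) \ C))
              else 0 else 0 else 0)
          = if a ∈ C then δ (∏ i ∈ C, y i) * ((m+1) • Pf δ y k (m+1) (S \ C)) else 0 := by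
        intro C hC
        rw [Finset.mem_powersetCard] at hC
        by_cases haC : a ∈ C
        · rw [if_pos haC]
          have key : ∀ B ∈ S.powersetCard k,
              (if a ∉ B then if C ⊆ S \ B then if a ∈ C then
                  δ (∏ i ∈ B, y i) * (δ (∏ i ∈ C, y i) * Pf δ y k m ((S \ B) \ C))
                else 0 else 0 else 0)
              = if B ⊆ S \ C then
                  δ (∏ i ∈ C, y i) * (δ (∏ i ∈ B, y i) * Pf δ y k m ((S \ C) \ B))
                else 0 := by
            intro B hB
            rw [Finset.mem_powersetCard] at hB
            by_cases hBC : B ⊆ S \ C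
            · have hdisj : Disjoint B C := (Finset.subset_sdiff.1 hBC).2
              have haB : a ∉ B := fun h => (Finset.disjoint_left.1 hdisj h) haC
              have hCB : C ⊆ S \ B := Finset.subset_sdiff.2 ⟨hC.1, hdisj.symm⟩
              rw [if_pos hBC, if_pos haB, if_pos hCB, if_pos haC, sdiff_sdiff_comm]
              ring
            · rw [if_neg hBC]
              by_cases haB : a ∉ B
              · rw [if_pos haB]
                by_cases hCB : C ⊆ S \ B
                · exfalso
                  exact hBC (Finset.subset_sdiff.2
                    ⟨hB.1, ((Finset.subset_sdiff.1 hCB).2).symm⟩)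
                · rw [if_neg hCB]
              · rw [if_neg haB]
          rw [Finset.sum_congr rfl key, ← Finset.sum_filter,
            ← pc_sdiff S (S \ C) k Finset.sdiff_subset, ← Finset.mul_sum, ih]
        · rw [if_neg haC]
          refine Finset.sum_eq_zero fun B hB => ?_
          by_cases haB : a ∉ B
          · rw [if_pos haB]
            by_cases hCB : C ⊆ S \ B
            · rw [if_pos hCB, if_neg haC]
            · rw [if_neg hCB]
          · rw [if_neg haB]
      rw [Finset.sum_congr rfl step2]
      have final : ∀ C ∈ S.powersetCard k,
          (if a ∈ C then δ (∏ i ∈ C, y i) * ((m+1) • Pf δ y k (m+1) (S \ C)) else 0)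
          = (m+1) • (if a ∈ C then δ (∏ i ∈ C, y i) * Pf δ y k (m+1) (S \ C) else 0) := by
        intro C hC
        by_cases haC : a ∈ C
        · rw [if_pos haC, if_pos haC, mul_smul_comm]
        · rw [if_neg haC, if_neg haC, smul_zero]
      rw [Finset.sum_congr rfl final, ← Finset.smul_sum]
      congr 1
      rw [Pf_succ' δ y hk (m+1) hS, ← hadef]
    rw [part1, part2, succ_nsmul]
    ring

lemma form (δ : Module.Dual K H) {k : ℕ} (hk : 1 ≤ k)
    (hδ1 : δ 1 = 0) (hδI : ∀ f ∈ (augIdeal K H) ^ (k + 1), δ f = 0)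
    (y : ℕ → H) (hy : ∀ i, y i ∈ augIdeal K H) (m : ℕ) (S : Finset ℕ)
    (hS : S.card = m * k) :
    convPow K H δ m (∏ i ∈ S, y i) = (m.factorial) • Pf δ y k m S := by
  classical
  induction m generalizing S with
  | zero =>
    have hSe : S = ∅ := Finset.card_eq_zero.1 (by simpa using hS)
    subst hSe
    show Coalgebra.counit (R := K) (∏ i ∈ (∅ : Finset ℕ), y i) = _
    rw [Finset.prod_empty, Bialgebra.counit_one, Pf_zero, if_pos rfl]
    simp
  | succ m ih =>
    have Vm := V_all hk hδ1 hδI m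
    rw [conv_succ_prod_eq hδI m Vm y hy S (by rw [hS])]
    have hterm : ∀ B ∈ S.powersetCard k,
        convPow K H δ m (∏ i ∈ S \ B, y i) * δ (∏ i ∈ B, y i)
        = m.factorial • (δ (∏ i ∈ B, y i) * Pf δ y k m (S \ B)) := by
      intro B hB
      rw [Finset.mem_powersetCard] at hB
      have hcard : (S \ B).card = m * k := by
        rw [Finset.card_sdiff_of_subset hB.1, hS, hB.2, add_mul, one_mul, Nat.add_sub_cancel]
      rw [ih _ hcard, smul_mul_assoc, mul_comm]
    rw [Finset.sum_congr rfl hterm, ← Finset.smul_sum, KL δ y hk m S, smul_smul,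
      Nat.factorial_succ, mul_comm]

end Stmt5

/-- Let `K` be a field of characteristic `p > 0` and `H` a commutative
Hopf algebra over `K` with augmentation ideal `I = ker ε`.  Let `k ≥ 1` and let
`δ : H → K` be a `K`-linear functional with `δ(1) = 0` and `δ(I^{k+1}) = 0`
(i.e. `δ ∈ Di_k^+(H)`).  Then the `p`-th power of `δ` under the convolution product
satisfies `δ^p(I^{pk}) = 0` and `δ^p(1) = 0`; that is, `δ^p ∈ Di_{pk−1}^+(H)`. -/
theorem stmt_5 (K : Type*) [Field K] (p : ℕ) (hp : p.Prime) [CharP K p]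
    (H : Type*) [CommRing H] [HopfAlgebra K H]
    (k : ℕ) (hk : 1 ≤ k)
    (δ : Module.Dual K H)
    (hδ1 : δ 1 = 0)
    (hδI : ∀ f ∈ (augIdeal K H) ^ (k + 1), δ f = 0) :
    (∀ f ∈ (augIdeal K H) ^ (p * k), convPow K H δ p f = 0) ∧ convPow K H δ p 1 = 0 := by
  classical
  constructor
  · intro f hf
    have hpk1 : 1 ≤ p * k := Nat.mul_pos hp.pos hk
    have hsp := Stmt5.mem_span_prods hpk1 hf
    have hker : f ∈ LinearMap.ker (convPow K H δ p) := by
      refine Submodule.span_le.2 ?_ hsp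
      rintro z ⟨l, hlen, hmem, rfl⟩
      rw [SetLike.mem_coe, LinearMap.mem_ker]
      set y : ℕ → H := fun i => l.getD i 0 with hy'
      have hy : ∀ i, y i ∈ augIdeal K H := by
        intro i
        show l.getD i 0 ∈ augIdeal K H
        by_cases hi : i < l.length
        · rw [List.getD_eq_getElem l 0 hi]
          exact hmem _ (List.getElem_mem hi)
        · rw [List.getD_eq_default l 0 (by omega)]
          exact zero_mem _
      have hprod : l.prod = ∏ i ∈ Finset.range l.length, y i :=
        (Stmt5.prod_range_getD l).symm
      rw [hprod, Stmt5.form δ hk hδ1 hδI y hy p (Finset.range l.length)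
        (by rw [Finset.card_range, hlen])]
      have hchar : (p.factorial : K) = 0 :=
        (CharP.cast_eq_zero_iff K p _).2 (Nat.dvd_factorial hp.pos le_rfl)
      rw [nsmul_eq_mul, hchar, zero_mul]
    exact hker
  · obtain ⟨q, rfl⟩ : ∃ q, p = q + 1 := ⟨p - 1, by have := hp.pos; omega⟩
    rw [Stmt5.convPow_succ_apply, Bialgebra.comul_one, Algebra.TensorProduct.one_def,
      Stmt5.psi_tmul, hδ1, mul_zero]
end
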